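/- Let (𝒱,ℰ,s,r,≥) be a straight ordered surjective mono-graph generating a stationary ordered Bratteli diagram (V,E,≥). The diagram admits a continuous Vershik map ψ : E_{0,∞} → E_{0,∞} if and only if it satisfies the continuity condition: there exists a surjective map ψ̄ : 𝒱_{max,1} → 𝒱_{min,1} such that for every non-maximal edge e ∈ ℰ, ψ̄(max(s(e))) = min(s(e(serial))), where e(serial) is the successor of e in the order on r^{-1}(r(e)). -/

import Mathlib

set_option linter.unusedSectionVars false
open scoped Classical
set_option maxHeartbeats 1000000

/-- An edge is maximal in its range fiber. -/
def FibMax {𝒱 ℰ : Type} [PartialOrder ℰ] (rE : ℰ → 𝒱) (e : ℰ) : Prop :=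
  ∀ e', rE e' = rE e → e' ≤ e

/-- An edge is minimal in its range fiber. -/
def FibMin {𝒱 ℰ : Type} [PartialOrder ℰ] (rE : ℰ → 𝒱) (e : ℰ) : Prop :=
  ∀ e', rE e' = rE e → e ≤ e'

/-- `e'` is the (serial) successor of `e` in its range fiber. -/
def Serial {𝒱 ℰ : Type} [PartialOrder ℰ] (rE : ℰ → 𝒱) (e e' : ℰ) : Prop :=
  rE e' = rE e ∧ e < e' ∧ ∀ e'', rE e'' = rE e → e < e'' → e' ≤ e''

/-- The space `E_{0,∞}` of infinite paths of the stationary ordered Bratteli diagram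
generated by a mono-graph `(𝒱,ℰ,s,r)` with `n v` edges from the root `v₀` to `(v,1)`:
a path is a level-one edge (a pair `(v,i)` with `i < n v`) together with a chained
sequence of edges of `ℰ` (levels `≥ 2`). -/
abbrev PathSp {𝒱 : Type} (ℰ : Type) (sE rE : ℰ → 𝒱) (nv : 𝒱 → ℕ) : Type :=
  {p : ((v : 𝒱) × Fin (nv v)) × (ℕ → ℰ) //
    sE (p.2 0) = p.1.1 ∧ ∀ i, sE (p.2 (i + 1)) = rE (p.2 i)}

/-- A maximal infinite path: every edge is maximal in its fiber. -/
def IsMaxPath {𝒱 ℰ : Type} [PartialOrder ℰ] (sE rE : ℰ → 𝒱) (nv : 𝒱 → ℕ)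
    (p : PathSp ℰ sE rE nv) : Prop :=
  ((p.1.1.2 : ℕ) + 1 = nv p.1.1.1) ∧ ∀ i, FibMax rE (p.1.2 i)

/-- A minimal infinite path: every edge is minimal in its fiber. -/
def IsMinPath {𝒱 ℰ : Type} [PartialOrder ℰ] (sE rE : ℰ → 𝒱) (nv : 𝒱 → ℕ)
    (p : PathSp ℰ sE rE nv) : Prop :=
  ((p.1.1.2 : ℕ) = 0) ∧ ∀ i, FibMin rE (p.1.2 i)

/-- `q` is the lexicographic successor of the (non-maximal) path `p`. -/
def Succ {𝒱 ℰ : Type} [PartialOrder ℰ] (sE rE : ℰ → 𝒱) (nv : 𝒱 → ℕ)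
    (p q : PathSp ℰ sE rE nv) : Prop :=
  ((p.1.1.2 : ℕ) + 1 < nv p.1.1.1 ∧ q.1.2 = p.1.2 ∧ q.1.1.1 = p.1.1.1 ∧
    (q.1.1.2 : ℕ) = (p.1.1.2 : ℕ) + 1) ∨
  ((p.1.1.2 : ℕ) + 1 = nv p.1.1.1 ∧ ∃ k : ℕ,
    (∀ i, i < k → FibMax rE (p.1.2 i)) ∧ ¬ FibMax rE (p.1.2 k) ∧
    Serial rE (p.1.2 k) (q.1.2 k) ∧ (∀ i, k < i → q.1.2 i = p.1.2 i) ∧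
    (∀ i, i < k → FibMin rE (q.1.2 i)) ∧ (q.1.1.2 : ℕ) = 0)

/-- Vertices carrying a maximal loop edge (`𝒱_{max,1}`). -/
def Vmax1 {𝒱 ℰ : Type} [PartialOrder ℰ] (sE rE : ℰ → 𝒱) : Set 𝒱 :=
  {w | ∃ e, sE e = w ∧ rE e = w ∧ FibMax rE e}

/-- Vertices carrying a minimal loop edge (`𝒱_{min,1}`). -/
def Vmin1 {𝒱 ℰ : Type} [PartialOrder ℰ] (sE rE : ℰ → 𝒱) : Set 𝒱 :=
  {w | ∃ e, sE e = w ∧ rE e = w ∧ FibMin rE e}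

section MyAux

variable {𝒱 ℰ : Type} [PartialOrder ℰ] {sE rE : ℰ → 𝒱}

lemma my_fibmax_eq {e e' : ℰ} (h : FibMax rE e) (h' : FibMax rE e') (hr : rE e = rE e') :
    e = e' :=
  le_antisymm (h' e hr) (h e' hr.symm)

lemma my_fibmin_eq {e e' : ℰ} (h : FibMin rE e) (h' : FibMin rE e') (hr : rE e = rE e') :
    e = e' :=
  le_antisymm (h e' hr.symm) (h' e hr)

lemma my_serial_eq {e a b : ℰ} (ha : Serial rE e a) (hb : Serial rE e b) : a = b :=
  le_antisymm (ha.2.2 b hb.1 hb.2.1) (hb.2.2 a ha.1 ha.2.1)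

lemma my_serial_not_fibmax {e a : ℰ} (ha : Serial rE e a) : ¬ FibMax rE e :=
  fun h => absurd (h a ha.1) (not_le_of_gt ha.2.1)

lemma my_serial_exists [Fintype ℰ] (hcomp : ∀ e e' : ℰ, rE e = rE e' ↔ (e ≤ e' ∨ e' ≤ e))
    {e : ℰ} (h : ¬ FibMax rE e) : ∃ e', Serial rE e e' := by
  classical
  obtain ⟨f, hfr, hfe⟩ : ∃ f, rE f = rE e ∧ ¬ f ≤ e := by
    by_contra hc; push_neg at hc; exact h fun e' h' => hc e' h'
  have hef : e < f := by
    rcases (hcomp f e).1 hfr with h' | h'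
    · exact absurd h' hfe
    · exact lt_of_le_of_ne h' fun hh => hfe (hh ▸ le_refl e)
  obtain ⟨m, hm, hmin⟩ : ∃ m ∈ (Finset.univ.filter fun g => rE g = rE e ∧ e < g),
      ∀ x ∈ (Finset.univ.filter fun g => rE g = rE e ∧ e < g), ¬ x < m := by
    obtain ⟨m, hm⟩ := Finset.exists_minimal (s := Finset.univ.filter fun g => rE g = rE e ∧ e < g)
      ⟨f, by simp [hfr, hef]⟩
    exact ⟨m, hm.1, fun x hx hlt => absurd (hm.2 hx hlt.le) (not_le_of_gt hlt)⟩
  simp only [Finset.mem_filter, Finset.mem_univ, true_and] at hm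
  refine ⟨m, hm.1, hm.2, fun g hg hg' => ?_⟩
  have hng := hmin g (by simp [hg, hg'])
  rcases (hcomp m g).1 (hm.1.trans hg.symm) with h' | h'
  · exact h'
  · rcases lt_or_eq_of_le h' with h'' | h''
    · exact absurd h'' hng
    · exact le_of_eq h''.symm

/-- Sources are constant along a chain of fiber-maximal (resp. minimal) edges,
given uniqueness-type data. -/
lemma my_src_const (F : ℰ → Prop) (cE : 𝒱 → ℰ)
    (huniq : ∀ e, F e → e = cE (rE e))
    (hloop : ∀ e, F e → sE (cE (sE e)) = sE e)
    (f : ℕ → ℰ) (hf : ∀ i, sE (f (i + 1)) = rE (f i)) :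
    ∀ n, (∀ i, i ≤ n → F (f i)) → ∀ i, i ≤ n → sE (f i) = sE (f n) := by
  intro n
  induction n with
  | zero => intro _ i hi; interval_cases i; rfl
  | succ n ih =>
    intro hF i hi
    have hadj : sE (f n) = sE (f (n + 1)) := by
      have h1 : f n = cE (rE (f n)) := huniq _ (hF n (by omega))
      have h2 : rE (f n) = sE (f (n + 1)) := (hf n).symm
      calc sE (f n) = sE (cE (sE (f (n+1)))) := by rw [h1, h2]
        _ = sE (f (n + 1)) := hloop _ (hF (n+1) le_rfl)
    rcases Nat.eq_or_lt_of_le hi with h | h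
    · rw [h]
    · exact (ih (fun j hj => hF j (by omega)) i (by omega)).trans hadj

/-- Extensionality for the head component. -/
lemma my_sigma_fin_ext {nv : 𝒱 → ℕ} {a b : (v : 𝒱) × Fin (nv v)}
    (h1 : a.1 = b.1) (h2 : (a.2 : ℕ) = (b.2 : ℕ)) : a = b := by
  obtain ⟨av, ai⟩ := a; obtain ⟨bv, bi⟩ := b
  cases h1
  simp only [Sigma.mk.inj_iff, heq_eq_eq, true_and]
  exact Fin.ext h2

end MyAux
section MyPsi

variable {𝒱 ℰ : Type} [PartialOrder ℰ]

/-- The tail sequence of the successor path in the "carry" case. -/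
def my_gseq (sE : ℰ → 𝒱) (minE : 𝒱 → ℰ) (f : ℕ → ℰ) (k : ℕ) (e' : ℰ) : ℕ → ℰ := fun j =>
  if k < j then f j else if j = k then e'
  else if j = k - 1 then minE (sE e') else minE (sE (minE (sE e')))

lemma my_gseq_chain (sE rE : ℰ → 𝒱) (minE : 𝒱 → ℰ) (f : ℕ → ℰ) (k : ℕ) (e' : ℰ)
    (hf : ∀ i, sE (f (i + 1)) = rE (f i)) (hre : rE e' = rE (f k))
    (hminE : ∀ v, rE (minE v) = v)
    (hW : ∀ v, sE (minE (sE (minE v))) = sE (minE v)) :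
    ∀ i, sE (my_gseq sE minE f k e' (i + 1)) = rE (my_gseq sE minE f k e' i) := by
  intro i
  rcases Nat.lt_or_ge i k with hik | hik
  · -- i < k
    rcases Nat.eq_or_lt_of_le (Nat.succ_le_of_lt hik) with h1 | h1
    · -- i + 1 = k
      simp only [my_gseq, if_neg (by omega : ¬ k < i + 1), if_pos h1,
        if_neg (by omega : ¬ k < i), if_neg (by omega : i ≠ k), if_pos (by omega : i = k - 1),
        hminE]
    · rcases Nat.eq_or_lt_of_le (Nat.succ_le_of_lt h1) with h2 | h2
      · -- i + 2 = k, so i + 1 = k - 1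
        simp only [my_gseq, if_neg (by omega : ¬ k < i + 1), if_neg (by omega : i + 1 ≠ k),
          if_pos (by omega : i + 1 = k - 1), if_neg (by omega : ¬ k < i),
          if_neg (by omega : i ≠ k), if_neg (by omega : i ≠ k - 1), hminE]
      · -- i + 1 < k - 1
        simp only [my_gseq, if_neg (by omega : ¬ k < i + 1), if_neg (by omega : i + 1 ≠ k),
          if_neg (by omega : i + 1 ≠ k - 1), if_neg (by omega : ¬ k < i),
          if_neg (by omega : i ≠ k), if_neg (by omega : i ≠ k - 1), hminE, hW]
  · rcases Nat.eq_or_lt_of_le hik with h1 | h1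
    · -- i = k
      subst h1
      have e1 : my_gseq sE minE f k e' (k + 1) = f (k + 1) := by
        simp only [my_gseq, if_pos (by omega : k < k + 1)]
      have e2 : my_gseq sE minE f k e' k = e' := by
        simp [my_gseq]
      rw [e1, e2, hf, hre]
    · -- k < i
      simp only [my_gseq, if_pos (by omega : k < i + 1), if_pos h1, hf]

end MyPsi
open Classical in
/-- The Vershik map constructed from the data. -/
noncomputable def my_psi {𝒱 ℰ : Type} [PartialOrder ℰ] (sE rE : ℰ → 𝒱) (nv : 𝒱 → ℕ)
    (hnv : ∀ v, 0 < nv v) (minE : 𝒱 → ℰ) (succE : ℰ → ℰ) (ψb : 𝒱 → 𝒱)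
    (hminE : ∀ v, rE (minE v) = v)
    (hsucc : ∀ e, ¬ FibMax rE e → rE (succE e) = rE e)
    (hW : ∀ v, sE (minE (sE (minE v))) = sE (minE v))
    (hC : ∀ e, FibMax rE e → sE (minE (ψb (sE e))) = ψb (sE e))
    (p : PathSp ℰ sE rE nv) : PathSp ℰ sE rE nv :=
  if h1 : (p.1.1.2 : ℕ) + 1 < nv p.1.1.1 then
    ⟨⟨⟨p.1.1.1, ⟨(p.1.1.2 : ℕ) + 1, h1⟩⟩, p.1.2⟩, p.2⟩
  else if h2 : ∃ k, ¬ FibMax rE (p.1.2 k) then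
    ⟨⟨⟨sE (my_gseq sE minE p.1.2 (Nat.find h2) (succE (p.1.2 (Nat.find h2))) 0),
        ⟨0, hnv _⟩⟩, my_gseq sE minE p.1.2 (Nat.find h2) (succE (p.1.2 (Nat.find h2)))⟩,
      rfl, my_gseq_chain sE rE minE p.1.2 _ _ p.2.2 (hsucc _ (Nat.find_spec h2)) hminE hW⟩
  else
    ⟨⟨⟨sE (minE (ψb (sE (p.1.2 0)))), ⟨0, hnv _⟩⟩, fun _ => minE (ψb (sE (p.1.2 0)))⟩,
      rfl, fun _ =>
        (hC _ (not_not.1 fun hc => h2 ⟨0, hc⟩)).trans (hminE _).symm⟩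
lemma my_cyl_mem_nhds {𝒱 ℰ : Type} (sE rE : ℰ → 𝒱) (nv : 𝒱 → ℕ)
    [TopologicalSpace ℰ] [DiscreteTopology ℰ]
    [TopologicalSpace ((v : 𝒱) × Fin (nv v))] [DiscreteTopology ((v : 𝒱) × Fin (nv v))]
    (p : PathSp ℰ sE rE nv) (M : ℕ) :
    {q : PathSp ℰ sE rE nv | q.1.1 = p.1.1 ∧ ∀ j ≤ M, q.1.2 j = p.1.2 j} ∈ nhds p := by
  have hopen : IsOpen {q : PathSp ℰ sE rE nv | q.1.1 = p.1.1 ∧ ∀ j ≤ M, q.1.2 j = p.1.2 j} := by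
    have hset : {q : PathSp ℰ sE rE nv | q.1.1 = p.1.1 ∧ ∀ j ≤ M, q.1.2 j = p.1.2 j}
        = Subtype.val ⁻¹' ((Prod.fst ⁻¹' {p.1.1}) ∩
            ⋂ j ∈ Finset.range (M + 1),
              (fun x : ((v : 𝒱) × Fin (nv v)) × (ℕ → ℰ) => x.2 j) ⁻¹' {p.1.2 j}) := by
      ext q
      simp [Set.mem_iInter, Nat.lt_succ_iff]
    rw [hset]
    apply IsOpen.preimage continuous_subtype_val
    apply IsOpen.inter
    · exact (isOpen_discrete _).preimage continuous_fst
    · exact isOpen_biInter_finset fun j _ =>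
        (isOpen_discrete _).preimage ((continuous_apply j).comp continuous_snd)
  exact hopen.mem_nhds ⟨rfl, fun j _ => rfl⟩
/-- A straight ordered surjective mono-graph generates a Bratteli–Vershik model
(a continuous Vershik map on the path space) if and only if it satisfies the
continuity condition. -/
theorem stmt11 {𝒱 ℰ : Type} [Fintype 𝒱] [Fintype ℰ] [PartialOrder ℰ]
    [TopologicalSpace ℰ] [DiscreteTopology ℰ]
    (sE rE : ℰ → 𝒱) (nv : 𝒱 → ℕ)
    [TopologicalSpace ((v : 𝒱) × Fin (nv v))]
    [DiscreteTopology ((v : 𝒱) × Fin (nv v))]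
    (hr : Function.Surjective rE) (hs : Function.Surjective sE)
    (hnv : ∀ v, 0 < nv v)
    (hcomp : ∀ e e' : ℰ, rE e = rE e' ↔ (e ≤ e' ∨ e' ≤ e))
    (maxV minV : 𝒱 → 𝒱)
    (hmaxV : ∀ v, ∃ e, rE e = v ∧ FibMax rE e ∧ maxV v = sE e)
    (hminV : ∀ v, ∃ e, rE e = v ∧ FibMin rE e ∧ minV v = sE e)
    (hmax1 : ∀ v, maxV v ∈ Vmax1 sE rE) (hmin1 : ∀ v, minV v ∈ Vmin1 sE rE)
    (hstrMax : ∀ p : PathSp ℰ sE rE nv, IsMaxPath sE rE nv p → ∃ e, ∀ i, p.1.2 i = e)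
    (hstrMin : ∀ p : PathSp ℰ sE rE nv, IsMinPath sE rE nv p → ∃ e, ∀ i, p.1.2 i = e) :
    (∃ ψ : PathSp ℰ sE rE nv → PathSp ℰ sE rE nv,
      Continuous ψ ∧
      ψ '' {p | IsMaxPath sE rE nv p} = {p | IsMinPath sE rE nv p} ∧
      ∀ p, ¬ IsMaxPath sE rE nv p → Succ sE rE nv p (ψ p)) ↔
    (∃ ψb : 𝒱 → 𝒱,
      (∀ v ∈ Vmax1 sE rE, ψb v ∈ Vmin1 sE rE) ∧
      (∀ w ∈ Vmin1 sE rE, ∃ v ∈ Vmax1 sE rE, ψb v = w) ∧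
      (∀ e e' : ℰ, Serial rE e e' → ψb (maxV (sE e)) = minV (sE e'))) := by

  choose maxE hmaxE1 hmaxE2 hmaxE3 using hmaxV
  choose minE hminE1 hminE2 hminE3 using hminV
  have hVmax1loop : ∀ w ∈ Vmax1 sE rE, sE (maxE w) = w := by
    rintro w ⟨ℓ, hs1, hr1, hm1⟩
    rw [my_fibmax_eq (hmaxE2 w) hm1 (by rw [hmaxE1, hr1]), hs1]
  have hVmin1loop : ∀ w ∈ Vmin1 sE rE, sE (minE w) = w := by
    rintro w ⟨ℓ, hs1, hr1, hm1⟩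
    rw [my_fibmin_eq (hminE2 w) hm1 (by rw [hminE1, hr1]), hs1]
  have hsrcmax : ∀ e, FibMax rE e → sE e = maxV (rE e) := fun e he =>
    calc sE e = sE (maxE (rE e)) :=
          congrArg sE (my_fibmax_eq he (hmaxE2 (rE e)) (hmaxE1 _).symm)
      _ = maxV (rE e) := (hmaxE3 _).symm
  have hsrcmin : ∀ e, FibMin rE e → sE e = minV (rE e) := fun e he =>
    calc sE e = sE (minE (rE e)) :=
          congrArg sE (my_fibmin_eq he (hminE2 (rE e)) (hminE1 _).symm)
      _ = minV (rE e) := (hminE3 _).symm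
  have hmemmax : ∀ e, FibMax rE e → sE e ∈ Vmax1 sE rE := fun e he =>
    (hsrcmax e he) ▸ hmax1 (rE e)
  have hmemmin : ∀ e, FibMin rE e → sE e ∈ Vmin1 sE rE := fun e he =>
    (hsrcmin e he) ▸ hmin1 (rE e)
  have hW : ∀ v, sE (minE (sE (minE v))) = sE (minE v) := fun v =>
    hVmin1loop _ (hmemmin _ (hminE2 v))
  have hdescMax : ∀ (f : ℕ → ℰ), (∀ i, sE (f (i + 1)) = rE (f i)) →
      ∀ n, (∀ i, i ≤ n → FibMax rE (f i)) → ∀ i, i ≤ n → sE (f i) = sE (f n) := fun f hf =>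
    my_src_const (FibMax rE) maxE
      (fun e he => my_fibmax_eq he (hmaxE2 _) (hmaxE1 _).symm)
      (fun e he => hVmax1loop _ (hmemmax e he)) f hf
  have hdescMin : ∀ (f : ℕ → ℰ), (∀ i, sE (f (i + 1)) = rE (f i)) →
      ∀ n, (∀ i, i ≤ n → FibMin rE (f i)) → ∀ i, i ≤ n → sE (f i) = sE (f n) := fun f hf =>
    my_src_const (FibMin rE) minE
      (fun e he => my_fibmin_eq he (hminE2 _) (hminE1 _).symm)
      (fun e he => hVmin1loop _ (hmemmin e he)) f hf
  have hnv' : ∀ v, nv v - 1 < nv v := fun v => by have := hnv v; omega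
  set succE : ℰ → ℰ := fun e =>
    if h : FibMax rE e then e else Classical.choose (my_serial_exists hcomp h) with hsuccdef
  have succE_spec : ∀ e, ¬ FibMax rE e → Serial rE e (succE e) := by
    intro e he
    rw [hsuccdef]
    simp only [dif_neg he]
    exact Classical.choose_spec (my_serial_exists hcomp he)
  constructor
  · -- Vershik map exists → combinatorial condition
    rintro ⟨ψ, hcont, himg, hsucc⟩
    have hPprop : ∀ (v : 𝒱) (h : v ∈ Vmax1 sE rE),
        sE (Classical.choose h) = v ∧ rE (Classical.choose h) = v ∧
          FibMax rE (Classical.choose h) := fun v h => Classical.choose_spec h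
    set Pmax : ∀ v : 𝒱, v ∈ Vmax1 sE rE → PathSp ℰ sE rE nv := fun v h =>
      ⟨⟨⟨v, ⟨nv v - 1, hnv' v⟩⟩, fun _ => Classical.choose h⟩,
        (hPprop v h).1, fun _ => (hPprop v h).1.trans (hPprop v h).2.1.symm⟩ with hPmaxdef
    have hPmaxIs : ∀ v h, IsMaxPath sE rE nv (Pmax v h) := fun v h =>
      ⟨by show nv v - 1 + 1 = nv v; have := hnv v; omega, fun _ => (hPprop v h).2.2⟩
    set ψb : 𝒱 → 𝒱 := fun v =>
      if h : v ∈ Vmax1 sE rE then (ψ (Pmax v h)).1.1.1 else v with hψbdef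
    refine ⟨ψb, ?_, ?_, ?_⟩
    · -- maps Vmax1 into Vmin1
      intro v hv
      have hmem : ψ (Pmax v hv) ∈ {p : PathSp ℰ sE rE nv | IsMinPath sE rE nv p} := by
        rw [← himg]; exact ⟨Pmax v hv, hPmaxIs v hv, rfl⟩
      obtain ⟨m, hm⟩ := hstrMin _ hmem
      have hmmin : FibMin rE m := hm 0 ▸ hmem.2 0
      have hmsr : sE m = rE m := by
        have h0 := (ψ (Pmax v hv)).2.2 0; rwa [hm 0, hm 1] at h0
      have hhead : (ψ (Pmax v hv)).1.1.1 = sE m := by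
        rw [← (ψ (Pmax v hv)).2.1, hm 0]
      show ψb v ∈ Vmin1 sE rE
      rw [hψbdef]
      simp only [dif_pos hv]
      rw [hhead]
      exact ⟨m, rfl, hmsr.symm, hmmin⟩
    · -- maps onto Vmin1
      intro w hw
      obtain ⟨m, hms, hmr, hmm⟩ := hw
      have hQmem : (⟨⟨⟨w, ⟨0, hnv w⟩⟩, fun _ => m⟩, hms, fun _ => hms.trans hmr.symm⟩ :
          PathSp ℰ sE rE nv) ∈ {p : PathSp ℰ sE rE nv | IsMinPath sE rE nv p} :=
        ⟨rfl, fun _ => hmm⟩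
      rw [← himg] at hQmem
      obtain ⟨p, hpmax, hpq⟩ := hQmem
      obtain ⟨e, hpe⟩ := hstrMax p hpmax
      have hefm : FibMax rE e := hpe 0 ▸ hpmax.2 0
      have hesr : sE e = rE e := by
        have h0 := p.2.2 0; rwa [hpe 0, hpe 1] at h0
      have hvdef : p.1.1.1 = sE e := by rw [← p.2.1, hpe 0]
      have hv : p.1.1.1 ∈ Vmax1 sE rE := ⟨e, hvdef.symm, by rw [← hesr, hvdef], hefm⟩
      refine ⟨p.1.1.1, hv, ?_⟩
      have hpeq : Pmax p.1.1.1 hv = p := by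
        apply Subtype.ext
        refine Prod.ext (my_sigma_fin_ext rfl ?_) (funext fun i => ?_)
        · show ((⟨nv p.1.1.1 - 1, hnv' _⟩ : Fin _) : ℕ) = (p.1.1.2 : ℕ)
          have h1 := hpmax.1
          have h2 := p.1.1.2.isLt
          show nv p.1.1.1 - 1 = (p.1.1.2 : ℕ)
          omega
        · show Classical.choose hv = p.1.2 i
          rw [hpe i]
          exact my_fibmax_eq (hPprop _ hv).2.2 hefm
            (by rw [(hPprop _ hv).2.1, ← hesr, hvdef])
      show ψb p.1.1.1 = w
      rw [hψbdef]
      simp only [dif_pos hv]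
      rw [hpeq, hpq]
    · -- the continuity condition
      intro e e' hser
      have hne : ¬ FibMax rE e := my_serial_not_fibmax hser
      set m := maxV (sE e) with hm
      have hm1 : m ∈ Vmax1 sE rE := hmax1 (sE e)
      have hℓspec := hPprop m hm1
      choose extE hextE using hs
      set c : ℕ → ℰ := fun n => Nat.rec (extE (rE e)) (fun _ ih => extE (rE ih)) n with hc
      set fseq : ℕ → ℕ → ℰ := fun n j =>
        if j < n then Classical.choose hm1 else if j = n then maxE (sE e)
        else if j = n + 1 then e else c (j - n - 2) with hf
      have hfℓ : ∀ n j, j < n → fseq n j = Classical.choose hm1 := fun n j h => by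
        simp only [hf, if_pos h]
      have hfn : ∀ n, fseq n n = maxE (sE e) := fun n => by
        simp only [hf]; rw [if_neg (by omega)]; simp
      have hfe : ∀ n, fseq n (n + 1) = e := fun n => by
        simp only [hf]; rw [if_neg (by omega), if_neg (by omega)]; simp
      have hfc : ∀ n j, n + 2 ≤ j → fseq n j = c (j - n - 2) := fun n j h => by
        simp only [hf]; rw [if_neg (by omega), if_neg (by omega), if_neg (by omega)]
      have hfhead : ∀ n, sE (fseq n 0) = m := by
        intro n
        rcases Nat.eq_zero_or_pos n with h | h
        · subst h; rw [hfn 0]; exact (hmaxE3 _).symm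
        · rw [hfℓ n 0 h]; exact hℓspec.1
      have hfchain : ∀ n i, sE (fseq n (i + 1)) = rE (fseq n i) := by
        intro n i
        rcases Nat.lt_or_ge (i + 1) n with h | h
        · rw [hfℓ n (i + 1) h, hfℓ n i (by omega)]
          exact hℓspec.1.trans hℓspec.2.1.symm
        rcases Nat.eq_or_lt_of_le h with h1 | h1
        · rw [← h1, hfn n, hfℓ n i (by omega)]
          exact (hmaxE3 _).symm.trans hℓspec.2.1.symm
        rcases Nat.eq_or_lt_of_le h1 with h2 | h2
        · rw [show i + 1 = n + 1 from by omega, hfe n,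
            show i = n from by omega, hfn n]
          exact (hmaxE1 _).symm
        rcases Nat.eq_or_lt_of_le h2 with h3 | h3
        · rw [show i + 1 = n + 2 from by omega, hfc n (n + 2) le_rfl,
            show i = n + 1 from by omega, hfe n, show n + 2 - n - 2 = 0 from by omega]
          show sE (c 0) = rE e
          exact hextE _
        · rw [hfc n (i + 1) (by omega), hfc n i (by omega),
            show i + 1 - n - 2 = (i - n - 2) + 1 from by omega]
          show sE (extE (rE (c (i - n - 2)))) = rE (c (i - n - 2))
          exact hextE _
      set pn : ℕ → PathSp ℰ sE rE nv := fun n =>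
        ⟨⟨⟨m, ⟨nv m - 1, hnv' m⟩⟩, fseq n⟩, hfhead n, hfchain n⟩ with hpn
      have hpnnotmax : ∀ n, ¬ IsMaxPath sE rE nv (pn n) := by
        intro n h
        have h2 := h.2 (n + 1)
        have : (pn n).1.2 (n + 1) = e := by
          show fseq n (n + 1) = e; exact hfe n
        rw [this] at h2
        exact hne h2
      have hheadall : ∀ n, (ψ (pn n)).1.1.1 = minV (sE e') := by
        intro n
        rcases hsucc (pn n) (hpnnotmax n) with ⟨hlt, _⟩ | ⟨_, k, hk1, hk2, hk3, hk4, hk5, hk6⟩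
        · exact absurd (show nv m - 1 + 1 < nv m from hlt)
            (by have := hnv m; omega)
        · have hpn12 : (pn n).1.2 = fseq n := rfl
          have hkn : k = n + 1 := by
            by_contra hkne
            rcases Nat.lt_or_ge k (n + 1) with hlt2 | hgt
            · apply hk2
              rw [hpn12]
              rcases Nat.lt_or_ge k n with hlt3 | hge3
              · rw [hfℓ n k hlt3]; exact hℓspec.2.2
              · rw [show k = n from by omega, hfn n]; exact hmaxE2 _
            · have h5 := hk1 (n + 1) (by omega)
              rw [hpn12, hfe n] at h5
              exact hne h5
          subst hkn
          rw [hpn12, hfe n] at hk3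
          have hq1 : (ψ (pn n)).1.2 (n + 1) = e' := my_serial_eq hk3 hser
          have hmin_i : ∀ i, i ≤ n → FibMin rE ((ψ (pn n)).1.2 i) :=
            fun i hi => hk5 i (by omega)
          have hdesc := hdescMin (ψ (pn n)).1.2 (ψ (pn n)).2.2 n hmin_i 0 (Nat.zero_le n)
          have hrn : rE ((ψ (pn n)).1.2 n) = sE e' := by
            have h0 := (ψ (pn n)).2.2 n
            rw [hq1] at h0
            exact h0.symm
          have hsn : sE ((ψ (pn n)).1.2 n) = minV (sE e') := by
            rw [hsrcmin _ (hmin_i n le_rfl), hrn]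
          rw [← (ψ (pn n)).2.1, hdesc, hsn]
      -- pn tends to the canonical maximal path over m
      have htend : Filter.Tendsto pn Filter.atTop (nhds (Pmax m hm1)) := by
        rw [tendsto_subtype_rng]
        apply Filter.Tendsto.prodMk_nhds
        · exact tendsto_const_nhds
        · rw [tendsto_pi_nhds]
          intro j
          refine Filter.Tendsto.congr'
            (Filter.eventually_atTop.2 ⟨j + 1, fun n hn => (hfℓ n j (by omega)).symm⟩)
            tendsto_const_nhds
      have htendhead : Filter.Tendsto (fun n => (ψ (pn n)).1.1) Filter.atTop
          (nhds ((ψ (Pmax m hm1)).1.1)) :=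
        ((continuous_fst.comp continuous_subtype_val).tendsto _).comp
          ((hcont.tendsto _).comp htend)
      rw [nhds_discrete] at htendhead
      obtain ⟨N, hN⟩ := Filter.eventually_atTop.1 (Filter.tendsto_pure.1 htendhead)
      have hfinal : (ψ (Pmax m hm1)).1.1.1 = minV (sE e') := by
        rw [← congrArg Sigma.fst (hN N le_rfl), hheadall N]
      show ψb m = minV (sE e')
      rw [hψbdef]
      simp only [dif_pos hm1]
      exact hfinal
  · -- combinatorial condition → Vershik map
    rintro ⟨ψb, hb1, hb2, hb3⟩
    have hC : ∀ e, FibMax rE e → sE (minE (ψb (sE e))) = ψb (sE e) := fun e he =>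
      hVmin1loop _ (hb1 _ (hmemmax e he))
    set ψ : PathSp ℰ sE rE nv → PathSp ℰ sE rE nv :=
      my_psi sE rE nv hnv minE succE ψb hminE1
        (fun e he => (succE_spec e he).1) hW hC with hψ
    have hEV : ∀ (p : PathSp ℰ sE rE nv) (j : ℕ), ∀ᶠ q in nhds p,
        (ψ q).1.1 = (ψ p).1.1 ∧ (ψ q).1.2 j = (ψ p).1.2 j := by
      intro p j
      by_cases h1 : (p.1.1.2 : ℕ) + 1 < nv p.1.1.1
      · filter_upwards [my_cyl_mem_nhds sE rE nv p j] with q hq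
        obtain ⟨hqh, hqe⟩ := hq
        have hvq : q.1.1.1 = p.1.1.1 := congrArg Sigma.fst hqh
        have hiq : (q.1.1.2 : ℕ) = (p.1.1.2 : ℕ) := by rw [hqh]
        have hnveq : nv q.1.1.1 = nv p.1.1.1 := congrArg nv hvq
        have h1q : (q.1.1.2 : ℕ) + 1 < nv q.1.1.1 := by omega
        constructor
        · simp only [hψ, my_psi, dif_pos h1q, dif_pos h1]
          exact my_sigma_fin_ext hvq (by simp [hiq])
        · simp only [hψ, my_psi, dif_pos h1q, dif_pos h1]
          exact hqe j le_rfl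
      · by_cases h2 : ∃ k, ¬ FibMax rE (p.1.2 k)
        · filter_upwards [my_cyl_mem_nhds sE rE nv p (max j (Nat.find h2))] with q hq
          obtain ⟨hqh, hqe⟩ := hq
          have hvq : q.1.1.1 = p.1.1.1 := congrArg Sigma.fst hqh
          have hiq : (q.1.1.2 : ℕ) = (p.1.1.2 : ℕ) := by rw [hqh]
          have hnveq : nv q.1.1.1 = nv p.1.1.1 := congrArg nv hvq
          have h1q : ¬ ((q.1.1.2 : ℕ) + 1 < nv q.1.1.1) := by omega
          have h2q : ∃ i, ¬ FibMax rE (q.1.2 i) :=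
            ⟨Nat.find h2, by
              rw [hqe (Nat.find h2) (le_max_right _ _)]; exact Nat.find_spec h2⟩
          have hkq : Nat.find h2q = Nat.find h2 := by
            rw [Nat.find_eq_iff]
            refine ⟨by rw [hqe (Nat.find h2) (le_max_right _ _)]; exact Nat.find_spec h2,
              fun i hik => ?_⟩
            rw [hqe i (le_trans (le_of_lt hik) (le_max_right j _))]
            exact Nat.find_min h2 hik
          have hek : q.1.2 (Nat.find h2) = p.1.2 (Nat.find h2) :=
            hqe (Nat.find h2) (le_max_right _ _)
          have hgeq : ∀ i, i ≤ max j (Nat.find h2) →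
              my_gseq sE minE q.1.2 (Nat.find h2) (succE (p.1.2 (Nat.find h2))) i =
              my_gseq sE minE p.1.2 (Nat.find h2) (succE (p.1.2 (Nat.find h2))) i := by
            intro i hi
            simp only [my_gseq]
            split_ifs
            · exact hqe i hi
            · rfl
            · rfl
            · rfl
          have hgq : ∀ i, i ≤ max j (Nat.find h2) →
              my_gseq sE minE q.1.2 (Nat.find h2q) (succE (q.1.2 (Nat.find h2q))) i =
              my_gseq sE minE p.1.2 (Nat.find h2) (succE (p.1.2 (Nat.find h2))) i := by
            rw [hkq, hek]; exact hgeq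
          constructor
          · simp only [hψ, my_psi, dif_neg h1q, dif_neg h1, dif_pos h2q, dif_pos h2]
            exact my_sigma_fin_ext (congrArg sE (hgq 0 (Nat.zero_le _))) rfl
          · simp only [hψ, my_psi, dif_neg h1q, dif_neg h1, dif_pos h2q, dif_pos h2]
            exact hgq j (le_max_left _ _)
        · -- p is (edgewise) maximal
          have hallmax : ∀ i, FibMax rE (p.1.2 i) := fun i => not_not.1 (not_exists.1 h2 i)
          filter_upwards [my_cyl_mem_nhds sE rE nv p (j + 2)] with q hq
          obtain ⟨hqh, hqe⟩ := hq
          have hvq : q.1.1.1 = p.1.1.1 := congrArg Sigma.fst hqh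
          have hiq : (q.1.1.2 : ℕ) = (p.1.1.2 : ℕ) := by rw [hqh]
          have hnveq : nv q.1.1.1 = nv p.1.1.1 := congrArg nv hvq
          have h1q : ¬ ((q.1.1.2 : ℕ) + 1 < nv q.1.1.1) := by omega
          by_cases h2q : ∃ i, ¬ FibMax rE (q.1.2 i)
          · have hkgt : j + 2 < Nat.find h2q := by
              rcases Nat.lt_or_ge (j + 2) (Nat.find h2q) with h | h
              · exact h
              · exact absurd (by rw [hqe (Nat.find h2q) h]; exact hallmax _)
                  (Nat.find_spec h2q)
            have hser : Serial rE (q.1.2 (Nat.find h2q)) (succE (q.1.2 (Nat.find h2q))) :=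
              succE_spec _ (Nat.find_spec h2q)
            have hkey : sE (minE (sE (succE (q.1.2 (Nat.find h2q))))) =
                ψb (sE (p.1.2 0)) := by
              have h3 := hb3 _ _ hser
              have hfm : FibMax rE (q.1.2 (Nat.find h2q - 1)) :=
                not_not.1 (Nat.find_min h2q (by omega))
              have hrq : rE (q.1.2 (Nat.find h2q - 1)) = sE (q.1.2 (Nat.find h2q)) := by
                have hc := q.2.2 (Nat.find h2q - 1)
                rw [show Nat.find h2q - 1 + 1 = Nat.find h2q from by omega] at hc
                exact hc.symm
              have hsrc : maxV (sE (q.1.2 (Nat.find h2q))) = sE (q.1.2 (Nat.find h2q - 1)) := by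
                rw [← hrq]
                exact (hsrcmax _ hfm).symm
              have hdesc : sE (q.1.2 0) = sE (q.1.2 (Nat.find h2q - 1)) :=
                hdescMax q.1.2 q.2.2 (Nat.find h2q - 1)
                  (fun i hi => not_not.1 (Nat.find_min h2q (by omega))) 0 (Nat.zero_le _)
              calc sE (minE (sE (succE (q.1.2 (Nat.find h2q)))))
                  = minV (sE (succE (q.1.2 (Nat.find h2q)))) := (hminE3 _).symm
                _ = ψb (maxV (sE (q.1.2 (Nat.find h2q)))) := h3.symm
                _ = ψb (sE (p.1.2 0)) := by rw [hsrc, ← hdesc, hqe 0 (by omega)]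
            have hg0 : my_gseq sE minE q.1.2 (Nat.find h2q)
                (succE (q.1.2 (Nat.find h2q))) 0 =
                minE (sE (minE (sE (succE (q.1.2 (Nat.find h2q)))))) := by
              simp only [my_gseq, if_neg (by omega : ¬ Nat.find h2q < 0),
                if_neg (by omega : (0:ℕ) ≠ Nat.find h2q),
                if_neg (by omega : (0:ℕ) ≠ Nat.find h2q - 1)]
            have hgj : my_gseq sE minE q.1.2 (Nat.find h2q)
                (succE (q.1.2 (Nat.find h2q))) j =
                minE (sE (minE (sE (succE (q.1.2 (Nat.find h2q)))))) := by
              simp only [my_gseq, if_neg (by omega : ¬ Nat.find h2q < j),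
                if_neg (by omega : j ≠ Nat.find h2q),
                if_neg (by omega : j ≠ Nat.find h2q - 1)]
            constructor
            · simp only [hψ, my_psi, dif_neg h1q, dif_neg h1, dif_pos h2q, dif_neg h2]
              refine my_sigma_fin_ext ?_ rfl
              show sE (my_gseq sE minE q.1.2 (Nat.find h2q)
                (succE (q.1.2 (Nat.find h2q))) 0) = sE (minE (ψb (sE (p.1.2 0))))
              rw [hg0, hW, hkey, hC _ (hallmax 0)]
            · simp only [hψ, my_psi, dif_neg h1q, dif_neg h1, dif_pos h2q, dif_neg h2]
              show my_gseq sE minE q.1.2 (Nat.find h2q)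
                (succE (q.1.2 (Nat.find h2q))) j = minE (ψb (sE (p.1.2 0)))
              rw [hgj, hkey]
          · constructor
            · simp only [hψ, my_psi, dif_neg h1q, dif_neg h1, dif_neg h2q, dif_neg h2]
              exact my_sigma_fin_ext
                (congrArg (fun x => sE (minE (ψb (sE x)))) (hqe 0 (by omega))) rfl
            · simp only [hψ, my_psi, dif_neg h1q, dif_neg h1, dif_neg h2q, dif_neg h2]
              exact congrArg (fun x => minE (ψb (sE x))) (hqe 0 (by omega))
    refine ⟨ψ, ?_, ?_, ?_⟩
    · -- continuity
      have h1 : Continuous fun p => (ψ p).1.1 := by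
        apply IsLocallyConstant.continuous
        rw [IsLocallyConstant.iff_eventually_eq]
        exact fun p => (hEV p 0).mono fun q hq => hq.1
      have h2 : Continuous fun p => (ψ p).1.2 := continuous_pi fun j => by
        apply IsLocallyConstant.continuous
        rw [IsLocallyConstant.iff_eventually_eq]
        exact fun p => (hEV p j).mono fun q hq => hq.2
      exact continuous_induced_rng.2 (h1.prodMk h2)
    · -- image of max paths is min paths
      apply Set.Subset.antisymm
      · rintro q ⟨p, hp, rfl⟩
        have h1 : ¬ ((p.1.1.2 : ℕ) + 1 < nv p.1.1.1) := by rw [hp.1]; omega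
        have h2 : ¬ ∃ k, ¬ FibMax rE (p.1.2 k) := by
          rintro ⟨k, hk⟩; exact hk (hp.2 k)
        simp only [Set.mem_setOf_eq, hψ, my_psi, dif_neg h1, dif_neg h2]
        exact ⟨rfl, fun i => hminE2 _⟩
      · intro q hq
        obtain ⟨m, hmconst⟩ := hstrMin q hq
        have hmmin : FibMin rE m := hmconst 0 ▸ hq.2 0
        have hmsr : sE m = rE m := by
          have h0 := q.2.2 0; rw [hmconst 0, hmconst 1] at h0; exact h0
        have hw : q.1.1.1 = sE m := by rw [← q.2.1, hmconst 0]
        have hwmin : sE m ∈ Vmin1 sE rE := ⟨m, rfl, hmsr.symm, hmmin⟩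
        obtain ⟨v, hv, hψbv⟩ := hb2 _ hwmin
        obtain ⟨ℓ, hℓs, hℓr, hℓm⟩ := hv
        set P : PathSp ℰ sE rE nv :=
          ⟨⟨⟨v, ⟨nv v - 1, hnv' v⟩⟩, fun _ => ℓ⟩, hℓs, fun _ => hℓs.trans hℓr.symm⟩ with hP
        have h1 : ¬ ((P.1.1.2 : ℕ) + 1 < nv P.1.1.1) := by
          show ¬ (nv v - 1 + 1 < nv v); have := hnv v; omega
        have h2 : ¬ ∃ k, ¬ FibMax rE (P.1.2 k) := by
          rintro ⟨k, hk⟩; exact hk hℓm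
        have hmeq : minE (ψb (sE (P.1.2 0))) = m := by
          show minE (ψb (sE ℓ)) = m
          rw [hℓs, hψbv]
          exact my_fibmin_eq (hminE2 _) hmmin (by rw [hminE1, hmsr])
        refine ⟨P, ⟨?_, fun _ => hℓm⟩, ?_⟩
        · show nv v - 1 + 1 = nv v; have := hnv v; omega
        · have hcomp : ψ P = ⟨⟨⟨sE (minE (ψb (sE (P.1.2 0)))), ⟨0, hnv _⟩⟩,
              fun _ => minE (ψb (sE (P.1.2 0)))⟩, rfl,
              fun _ => (hC _ (not_not.1 fun hc => h2 ⟨0, hc⟩)).trans (hminE1 _).symm⟩ := by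
            simp only [hψ, my_psi, dif_neg h1, dif_neg h2]
          rw [hcomp]
          apply Subtype.ext
          refine Prod.ext (my_sigma_fin_ext ?_ ?_) (funext fun i => ?_)
          · show sE (minE (ψb (sE (P.1.2 0)))) = q.1.1.1
            rw [hmeq, hw]
          · exact hq.1.symm
          · show minE (ψb (sE (P.1.2 0))) = q.1.2 i
            rw [hmeq, hmconst i]
    · -- successor property
      intro p hp
      by_cases h1 : (p.1.1.2 : ℕ) + 1 < nv p.1.1.1
      · left
        have hh : (ψ p).1.1 = ⟨p.1.1.1, ⟨(p.1.1.2 : ℕ) + 1, h1⟩⟩ := by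
          simp only [hψ, my_psi, dif_pos h1]
        refine ⟨h1, ?_, ?_, ?_⟩
        · simp only [hψ, my_psi, dif_pos h1]
        · rw [hh]
        · rw [hh]
      · right
        have htop : (p.1.1.2 : ℕ) + 1 = nv p.1.1.1 := by
          have := p.1.1.2.isLt; omega
        have h2 : ∃ k, ¬ FibMax rE (p.1.2 k) := by
          by_contra hc; push_neg at hc; exact hp ⟨htop, hc⟩
        refine ⟨htop, Nat.find h2, fun i hi => not_not.1 (Nat.find_min h2 hi),
          Nat.find_spec h2, ?_, ?_, ?_, ?_⟩
        · simp only [hψ, my_psi, dif_neg h1, dif_pos h2]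
          have hg : my_gseq sE minE p.1.2 (Nat.find h2) (succE (p.1.2 (Nat.find h2)))
              (Nat.find h2) = succE (p.1.2 (Nat.find h2)) := by
            simp [my_gseq]
          rw [hg]
          exact succE_spec _ (Nat.find_spec h2)
        · intro i hi
          simp only [hψ, my_psi, dif_neg h1, dif_pos h2, my_gseq, if_pos hi]
        · intro i hi
          simp only [hψ, my_psi, dif_neg h1, dif_pos h2, my_gseq,
            if_neg (by omega : ¬ Nat.find h2 < i), if_neg (by omega : i ≠ Nat.find h2)]
          split_ifs <;> exact hminE2 _
        · have hh : (ψ p).1.1 = ⟨sE (my_gseq sE minE p.1.2 (Nat.find h2)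
              (succE (p.1.2 (Nat.find h2))) 0), ⟨0, hnv _⟩⟩ := by
            simp only [hψ, my_psi, dif_neg h1, dif_pos h2]
          rw [hh]
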